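/- Let N ≥ 3, μ = 1 (cubic NLS), α < 0, let j be an integer with 0 ≤ j ≤ ⌊(N-1)/2⌋ and ω > α²/(N-2j)². Then M[Φ_ω^j] = 2N√ω - 2|α|, independently of j. Consequently, for m > 0 the mass constraint M[Φ_ω^j] = m is satisfied exactly when ω = ω* := (m + 2|α|)²/(4N²), the same frequency for every j. -/

import Mathlib

open Real MeasureTheory

/-- `sech y = 1 / cosh y`. -/
noncomputable def sech (y : ℝ) : ℝ := 1 / Real.cosh y

/-- Inverse hyperbolic tangent. -/
noncomputable def artanh (x : ℝ) : ℝ := (1 / 2) * Real.log ((1 + x) / (1 - x))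

/-- The half-line soliton profile `φ_{ω,a}(x) = [(μ+1)ω]^{1/(2μ)} sech^{1/μ}(μ√ω (x-a))`;
for `μ = 1` this is `√(2ω) sech(√ω (x-a))`. -/
noncomputable def solProfile (μ ω a : ℝ) (x : ℝ) : ℝ :=
  ((μ + 1) * ω) ^ (1 / (2 * μ)) * sech (μ * Real.sqrt ω * (x - a)) ^ (1 / μ)

/-- `a^j = (1/(μ√ω)) arctanh(|α|/((N-2j)√ω))`. -/
noncomputable def aCenter (μ α : ℝ) (N j : ℕ) (ω : ℝ) : ℝ :=
  (1 / (μ * Real.sqrt ω)) * _root_.artanh (|α| / (((N : ℝ) - 2 * j) * Real.sqrt ω))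

/-- The stationary state `Φ_ω^j` with `j` bumps. -/
noncomputable def statState (μ α : ℝ) (N j : ℕ) (ω : ℝ) : Fin N → ℝ → ℝ := fun i =>
  if (i : ℕ) < j then solProfile μ ω (aCenter μ α N j ω)
  else solProfile μ ω (-(aCenter μ α N j ω))

/-- The mass `M[Φ_ω^j] = Σ_i ∫_0^∞ |(Φ_ω^j)_i|² dx`. -/
noncomputable def massState (μ α : ℝ) (N j : ℕ) (ω : ℝ) : ℝ :=
  ∑ i : Fin N, ∫ x in Set.Ioi (0 : ℝ), |statState μ α N j ω i x| ^ 2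

/-- The cubic (`μ = 1`) NLS energy of the stationary state `Φ_ω^j`:
`E[Ψ] = (1/2) Σ_i ∫_0^∞ |ψ_i′|² - (1/4) Σ_i ∫_0^∞ |ψ_i|⁴ + (α/2)|ψ(0)|²`
(the common vertex value being `φ_{ω,-a^j}(0)`). -/
noncomputable def energyStateCubic (α : ℝ) (N j : ℕ) (ω : ℝ) : ℝ :=
  (1 / 2) * ∑ i : Fin N, ∫ x in Set.Ioi (0 : ℝ), |deriv (statState 1 α N j ω i) x| ^ 2
    - (1 / 4) * ∑ i : Fin N, ∫ x in Set.Ioi (0 : ℝ), |statState 1 α N j ω i x| ^ 4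
    + (α / 2) * |solProfile 1 ω (-(aCenter 1 α N j ω)) 0| ^ 2


open Filter in
private lemma myHasDerivAt_tanh (x : ℝ) : HasDerivAt Real.tanh (1 / Real.cosh x ^ 2) x := by
  have h := (Real.hasDerivAt_sinh x).div (Real.hasDerivAt_cosh x) (Real.cosh_pos x).ne'
  have e : (Real.cosh x * Real.cosh x - Real.sinh x * Real.sinh x) / Real.cosh x ^ 2
      = 1 / Real.cosh x ^ 2 := by
    rw [show Real.cosh x * Real.cosh x - Real.sinh x * Real.sinh x
        = Real.cosh x ^ 2 - Real.sinh x ^ 2 by ring, Real.cosh_sq_sub_sinh_sq]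
  rw [e] at h
  exact h.congr_of_eventuallyEq (Filter.Eventually.of_forall fun y =>
    (Real.tanh_eq_sinh_div_cosh y))

open Filter in
private lemma myTendsto_tanh : Tendsto Real.tanh atTop (nhds 1) := by
  have key : ∀ x : ℝ, Real.tanh x = 1 - 2 / (Real.exp (2 * x) + 1) := by
    intro x
    rw [Real.tanh_eq_sinh_div_cosh, Real.sinh_eq, Real.cosh_eq]
    have h1 : Real.exp x > 0 := Real.exp_pos x
    have h3 : Real.exp (2 * x) = Real.exp x * Real.exp x := by
      rw [← Real.exp_add]; ring_nf
    have h4 : Real.exp x * Real.exp (-x) = 1 := by rw [← Real.exp_add]; simp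
    field_simp
    rw [show x * 2 = 2 * x by ring, h3]; linear_combination (-2 * Real.exp x) * h4
  have h : Tendsto (fun x : ℝ => 1 - 2 / (Real.exp (2 * x) + 1)) atTop (nhds (1 - 0)) := by
    apply Tendsto.sub tendsto_const_nhds
    apply Tendsto.div_atTop tendsto_const_nhds
    exact (Real.tendsto_exp_atTop.comp (tendsto_id.const_mul_atTop two_pos)).atTop_add
      tendsto_const_nhds
  simpa using h.congr fun x => (key x).symm

private lemma myTanh_artanh (t : ℝ) (h1 : -1 < t) (h2 : t < 1) : Real.tanh (_root_.artanh t) = t := by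
  have hn : 0 < 1 + t := by linarith
  have hd : 0 < 1 - t := by linarith
  have hL : 0 < (1 + t) / (1 - t) := div_pos hn hd
  set y := _root_.artanh t with hy
  have hs : Real.exp y ^ 2 = (1 + t) / (1 - t) := by
    rw [hy, _root_.artanh, ← Real.exp_nat_mul]
    push_cast
    rw [show (2:ℝ) * ((1/2) * Real.log ((1+t)/(1-t))) = Real.log ((1+t)/(1-t)) by ring,
      Real.exp_log hL]
  have hsp : 0 < Real.exp y := Real.exp_pos y
  rw [Real.tanh_eq_sinh_div_cosh, Real.sinh_eq, Real.cosh_eq]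
  have hme : Real.exp (-y) = (Real.exp y)⁻¹ := Real.exp_neg y
  rw [hme]
  have h5 : 0 < Real.exp y + (Real.exp y)⁻¹ := by positivity
  have hkey : Real.exp y * Real.exp y = (1+t)/(1-t) := by rw [← sq]; exact hs
  rw [div_div_div_cancel_right₀ (hc := two_ne_zero), div_eq_iff h5.ne']
  field_simp at hkey ⊢
  nlinarith [hkey, hsp]

open Filter in
private lemma myIntegral_sol (ω b : ℝ) (hω : 0 < ω) :
    ∫ x in Set.Ioi (0:ℝ), |solProfile 1 ω b x| ^ 2
      = 2 * Real.sqrt ω + 2 * Real.sqrt ω * Real.tanh (Real.sqrt ω * b) := by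
  have hs : 0 < Real.sqrt ω := Real.sqrt_pos.2 hω
  set g : ℝ → ℝ := fun x => 2 * Real.sqrt ω * Real.tanh (Real.sqrt ω * (x - b)) with hg
  have hderiv : ∀ x : ℝ, HasDerivAt g (2 * ω / Real.cosh (Real.sqrt ω * (x - b)) ^ 2) x := by
    intro x
    have h1 : HasDerivAt (fun x : ℝ => Real.sqrt ω * (x - b)) (Real.sqrt ω) x := by
      simpa using ((hasDerivAt_id x).sub_const b).const_mul (Real.sqrt ω)
    have h2 := ((myHasDerivAt_tanh (Real.sqrt ω * (x - b))).comp x h1).const_mul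
      (2 * Real.sqrt ω)
    have hss : Real.sqrt ω * Real.sqrt ω = ω := Real.mul_self_sqrt hω.le
    have e : 2 * Real.sqrt ω * (1 / Real.cosh (Real.sqrt ω * (x-b)) ^ 2 * Real.sqrt ω)
        = 2 * ω / Real.cosh (Real.sqrt ω * (x-b)) ^ 2 := by
      calc 2 * Real.sqrt ω * (1 / Real.cosh (Real.sqrt ω * (x-b)) ^ 2 * Real.sqrt ω)
          = 2 * (Real.sqrt ω * Real.sqrt ω) / Real.cosh (Real.sqrt ω * (x-b)) ^ 2 := by ring
        _ = 2 * ω / Real.cosh (Real.sqrt ω * (x-b)) ^ 2 := by rw [hss]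
    rw [← e]; exact h2
  have hval : ∀ x : ℝ, |solProfile 1 ω b x| ^ 2
      = 2 * ω / Real.cosh (Real.sqrt ω * (x - b)) ^ 2 := by
    intro x
    have hc : 0 < Real.cosh (Real.sqrt ω * (x - b)) := Real.cosh_pos _
    have hc' : Real.cosh (Real.sqrt ω * (x - b)) ≠ 0 := hc.ne'
    rw [sq_abs, solProfile, sech,
        show (1:ℝ)/(2*1) = 1/2 by norm_num, show (1:ℝ)/1 = 1 by norm_num, Real.rpow_one,
        one_mul, mul_pow, ← Real.rpow_natCast ((((1:ℝ)+1)*ω) ^ ((1:ℝ)/2)) 2,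
        ← Real.rpow_mul (by positivity : (0:ℝ) ≤ ((1:ℝ)+1)*ω)]
    norm_num
    field_simp
  have hnonneg : ∀ x ∈ Set.Ioi (0:ℝ), 0 ≤ 2 * ω / Real.cosh (Real.sqrt ω * (x - b)) ^ 2 := by
    intro x _; positivity
  have hcont : ContinuousWithinAt g (Set.Ici 0) 0 := ((hderiv 0).continuousAt).continuousWithinAt
  have htend : Tendsto g atTop (nhds (2 * Real.sqrt ω)) := by
    have h1 : Tendsto (fun x : ℝ => Real.sqrt ω * (x - b)) atTop atTop :=
      (tendsto_atTop_add_const_right _ (-b) tendsto_id).const_mul_atTop hs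
    have h2 := (myTendsto_tanh.comp h1).const_mul (2 * Real.sqrt ω)
    simpa [Function.comp] using h2
  have hint := MeasureTheory.integral_Ioi_of_hasDerivAt_of_nonneg hcont
    (fun x _ => hderiv x) hnonneg htend
  calc ∫ x in Set.Ioi (0:ℝ), |solProfile 1 ω b x| ^ 2
      = ∫ x in Set.Ioi (0:ℝ), 2 * ω / Real.cosh (Real.sqrt ω * (x - b)) ^ 2 := by
        simp_rw [hval]
    _ = 2 * Real.sqrt ω - g 0 := hint
    _ = 2 * Real.sqrt ω + 2 * Real.sqrt ω * Real.tanh (Real.sqrt ω * b) := by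
        simp only [hg]
        rw [show Real.sqrt ω * ((0:ℝ) - b) = -(Real.sqrt ω * b) by ring, Real.tanh_neg]
        ring

/-- in the cubic case `μ = 1`, for `N ≥ 3`, `α < 0`, `0 ≤ j ≤ ⌊(N-1)/2⌋` and
`ω > α²/(N-2j)²`, the mass is `M[Φ_ω^j] = 2N√ω - 2|α|`, independently of `j`; consequently,
for `m > 0`, the constraint `M[Φ_ω^j] = m` holds exactly when `ω = (m+2|α|)²/(4N²)`. -/
theorem cubic_mass_constraint (N : ℕ) (hN : 3 ≤ N) (α : ℝ) (hα : α < 0)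
    (j : ℕ) (hj : j ≤ (N - 1) / 2) :
    (∀ ω : ℝ, α ^ 2 / ((N : ℝ) - 2 * j) ^ 2 < ω →
      massState 1 α N j ω = 2 * N * Real.sqrt ω - 2 * |α|) ∧
    (∀ m : ℝ, 0 < m → ∀ ω : ℝ, α ^ 2 / ((N : ℝ) - 2 * j) ^ 2 < ω →
      (massState 1 α N j ω = m ↔ ω = (m + 2 * |α|) ^ 2 / (4 * (N : ℝ) ^ 2))) := by
  have h2j : 2 * j ≤ N - 1 := by
    have := (Nat.le_div_iff_mul_le (by norm_num : 0 < 2)).1 hj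
    omega
  have hjN : j < N := by omega
  have hD1 : (1:ℝ) ≤ (N:ℝ) - 2 * j := by
    have h : (2 * j + 1 : ℕ) ≤ N := by omega
    have := Nat.cast_le (α := ℝ).2 h
    push_cast at this
    linarith
  have hDpos : (0:ℝ) < (N:ℝ) - 2 * j := by linarith
  have hαpos : 0 < |α| := abs_pos.2 hα.ne
  have hNpos : (0:ℝ) < N := by positivity
  have key : ∀ ω : ℝ, α ^ 2 / ((N : ℝ) - 2 * j) ^ 2 < ω →
      massState 1 α N j ω = 2 * N * Real.sqrt ω - 2 * |α| := by
    intro ω hω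
    have hω' : 0 < ω := lt_of_le_of_lt (by positivity) hω
    set D := (N:ℝ) - 2 * j with hDdef
    set s := Real.sqrt ω with hsdef
    have hs : 0 < s := Real.sqrt_pos.2 hω'
    have hs2 : s ^ 2 = ω := Real.sq_sqrt hω'.le
    set t := |α| / (D * s) with htdef
    have ht0 : 0 < t := by positivity
    have hα2 : α ^ 2 < ω * D ^ 2 := by
      have := (div_lt_iff₀ (by positivity : (0:ℝ) < D ^ 2)).1 hω
      linarith
    have ht1 : t < 1 := by
      rw [htdef, div_lt_one (by positivity)]
      nlinarith [sq_abs α, hα2, hs2, hDpos, hs, abs_nonneg α, mul_pos hDpos hs]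
    have hsa : s * aCenter 1 α N j ω = _root_.artanh t := by
      rw [htdef, hDdef, hsdef, aCenter]
      have := hs.ne'
      rw [hsdef] at this
      field_simp
    have htanh : Real.tanh (s * aCenter 1 α N j ω) = t := by
      rw [hsa]; exact myTanh_artanh t (by linarith) ht1
    have hst : s * t = |α| / D := by
      rw [htdef]
      field_simp
    have hterm : ∀ i : Fin N, (∫ x in Set.Ioi (0:ℝ), |statState 1 α N j ω i x| ^ 2)
        = if (i:ℕ) < j then 2*s + 2*s*t else 2*s - 2*s*t := by
      intro i
      by_cases h : (i:ℕ) < j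
      · simp only [statState, if_pos h]
        rw [myIntegral_sol ω _ hω', ← hsdef, htanh]
      · simp only [statState, if_neg h]
        rw [myIntegral_sol ω _ hω', ← hsdef,
          show s * (-(aCenter 1 α N j ω)) = -(s * aCenter 1 α N j ω) from by ring,
          Real.tanh_neg, htanh]
        ring
    rw [massState]
    simp_rw [hterm]
    rw [Finset.sum_ite, Finset.sum_const, Finset.sum_const]
    have e1 : (Finset.univ.filter (fun i : Fin N => (i : ℕ) < j)).card = j := by
      have e : Finset.univ.filter (fun i : Fin N => (i : ℕ) < j)
          = Finset.Iio (⟨j, hjN⟩ : Fin N) := by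
        ext i; simp [Fin.lt_def]
      rw [e, Fin.card_Iio]
    have e2 : (Finset.univ.filter (fun i : Fin N => ¬ (i : ℕ) < j)).card = N - j := by
      have e : Finset.univ.filter (fun i : Fin N => ¬ (i : ℕ) < j)
          = Finset.Ici (⟨j, hjN⟩ : Fin N) := by
        ext i; simp [Fin.le_def]
      rw [e, Fin.card_Ici]
    rw [e1, e2, nsmul_eq_mul, nsmul_eq_mul]
    have hcast : ((N - j : ℕ) : ℝ) = (N:ℝ) - j := by
      rw [Nat.cast_sub hjN.le]
    rw [hcast]
    have h1 : (j:ℝ) * (2*s + 2*s*t) + ((N:ℝ) - (j:ℝ)) * (2*s - 2*s*t)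
        = 2 * N * s - 2 * (D * (s * t)) := by
      rw [hDdef]; ring
    rw [h1, hst, mul_div_cancel₀ _ hDpos.ne']
  refine ⟨key, ?_⟩
  intro m hm ω hω
  rw [key ω hω]
  have hω' : 0 < ω := lt_of_le_of_lt (by positivity) hω
  have hs2 : Real.sqrt ω ^ 2 = ω := Real.sq_sqrt hω'.le
  constructor
  · intro h
    have hsv : Real.sqrt ω = (m + 2 * |α|) / (2 * N) := by
      field_simp
      linarith
    rw [← hs2, hsv]
    field_simp
    ring
  · intro h
    have hsv : Real.sqrt ω = (m + 2 * |α|) / (2 * N) := by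
      rw [h, show (m + 2 * |α|) ^ 2 / (4 * (N:ℝ) ^ 2) = ((m + 2 * |α|) / (2 * N)) ^ 2 from by
        field_simp; ring,
        Real.sqrt_sq (by positivity)]
    rw [hsv]
    field_simp
    ring
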